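/- arXiv:2406.04899 — 2 statements merged into one kernel-verified Lean document; each statement's English description precedes it below -/
import Mathlib

section
/- Multiplicative drift theorem: Let (X_t)_{t≥0} be a stochastic process on {0} ∪ [s_min, ∞) with s_min ≥ 1, adapted to a filtration, such that E[X_t − X_{t+1} | X_t] ≥ δ·X_t for some δ > 0 whenever X_t > 0. Let T = min{t : X_t = 0}. Then E[T | X_0] ≤ (ln(X_0) + 1)/δ. -/
open MeasureTheory
open scoped ENNReal
open scoped Classical

lemma drift_aux_log {smin a b : ℝ} (h1 : 1 ≤ smin) (ha : smin ≤ a) (hb : b = 0 ∨ smin ≤ b) :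
    (a - b) / a ≤ (Real.log a + 1) - (if b = 0 then 0 else Real.log b + 1) := by
  have ha1 : (1 : ℝ) ≤ a := h1.trans ha
  have ha0 : (0 : ℝ) < a := lt_of_lt_of_le one_pos ha1
  rcases hb with hb | hb
  · rw [if_pos hb, hb, sub_zero, div_self ha0.ne']
    have := Real.log_nonneg ha1
    linarith
  · have hb1 : (1 : ℝ) ≤ b := h1.trans hb
    have hb0 : (0 : ℝ) < b := lt_of_lt_of_le one_pos hb1
    rw [if_neg hb0.ne']
    have hlog : Real.log (b / a) ≤ b / a - 1 :=
      Real.log_le_sub_one_of_pos (div_pos hb0 ha0)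
    rw [Real.log_div hb0.ne' ha0.ne'] at hlog
    have h2 : (a - b) / a = 1 - b / a := by field_simp
    linarith
open MeasureTheory
open scoped ENNReal Classical

lemma drift_aux_hit (P : ℕ → Prop) :
    sInf {r : ℝ≥0∞ | ∃ t : ℕ, r = t ∧ P t}
      = ∑' t : ℕ, (if ∀ s ≤ t, ¬ P s then (1 : ℝ≥0∞) else 0) := by
  by_cases h : ∃ t, P t
  · set n := Nat.find h with hn
    have hspec : P n := Nat.find_spec h
    have hmin : ∀ m, m < n → ¬ P m := fun m hm => Nat.find_min h hm
    have hsInf : sInf {r : ℝ≥0∞ | ∃ t : ℕ, r = t ∧ P t} = (n : ℝ≥0∞) := by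
      refine le_antisymm (sInf_le ⟨n, rfl, hspec⟩) (le_sInf ?_)
      rintro r ⟨t, rfl, ht⟩
      exact_mod_cast Nat.cast_le.mpr (Nat.find_le ht)
    have hcond : ∀ t, (∀ s ≤ t, ¬ P s) ↔ t < n := by
      intro t
      constructor
      · intro hall
        by_contra hlt
        push_neg at hlt
        exact hall n hlt hspec
      · intro ht s hs
        exact hmin s (lt_of_le_of_lt hs ht)
    rw [hsInf]
    have heq : ∀ t : ℕ, (if ∀ s ≤ t, ¬ P s then (1 : ℝ≥0∞) else 0)
        = if t < n then (1 : ℝ≥0∞) else 0 := by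
      intro t; simp [hcond t]
    rw [tsum_congr heq,
      tsum_eq_sum (s := Finset.range n)
        (by intro t ht; simp [Finset.mem_range] at ht; simp [ht])]
    rw [Finset.sum_ite_of_true (by intro t ht; exact Finset.mem_range.mp ht)]
    simp
  · push_neg at h
    have hempty : {r : ℝ≥0∞ | ∃ t : ℕ, r = t ∧ P t} = ∅ := by
      ext r; simp [h]
    rw [hempty, sInf_empty]
    have heq : ∀ t : ℕ, (if ∀ s ≤ t, ¬ P s then (1 : ℝ≥0∞) else 0) = 1 := by
      intro t; simp [h]
    rw [tsum_congr heq]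
    exact (ENNReal.tsum_const_eq_top_of_ne_zero one_ne_zero).symm


/-- Multiplicative drift theorem (Doerr, Johannsen, Winzen): a nonnegative process on
`{0} ∪ [s_min, ∞)` with multiplicative drift `δ` hits `0` in expected time at most
`(ln X₀ + 1)/δ`. -/
theorem stmt_8 {Ω : Type*} {m : MeasurableSpace Ω} (μ : Measure Ω) [IsProbabilityMeasure μ]
    (ℱ : Filtration ℕ m) (X : ℕ → Ω → ℝ) (hadapted : Adapted ℱ X)
    (hint : ∀ t, Integrable (X t) μ)
    (smin : ℝ) (hsmin : 1 ≤ smin)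
    (hrange : ∀ t ω, X t ω = 0 ∨ smin ≤ X t ω)
    (δ : ℝ) (hδ : 0 < δ)
    (hdrift : ∀ t, ∀ᵐ ω ∂μ, 0 < X t ω →
      δ * X t ω ≤ (μ[fun ω' => X t ω' - X (t + 1) ω' | ℱ t]) ω)
    (x0 : ℝ) (hx0 : ∀ ω, X 0 ω = x0) :
    ∫⁻ ω, sInf {r : ℝ≥0∞ | ∃ t : ℕ, r = t ∧ X t ω = 0} ∂μ ≤
      ENNReal.ofReal ((Real.log x0 + 1) / δ) := by

  by_cases hx00 : x0 = 0
  · -- trivial case: process starts at 0, hitting time is 0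
    have hT : ∀ ω : Ω, sInf {r : ℝ≥0∞ | ∃ t : ℕ, r = t ∧ X t ω = 0} = 0 := by
      intro ω
      refine le_antisymm ?_ zero_le
      exact sInf_le ⟨0, by simp [hx0, hx00]⟩
    simp only [hT, lintegral_const, zero_mul]
    exact zero_le
  -- nontrivial case
  have hΩ : Nonempty Ω := by
    by_contra h
    rw [not_nonempty_iff] at h
    have h1 : (μ Set.univ : ℝ≥0∞) = 1 := measure_univ
    rw [Set.univ_eq_empty_iff.mpr h, measure_empty] at h1
    exact zero_ne_one h1
  obtain ⟨ω₀⟩ := hΩ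
  have hx0s : smin ≤ x0 := by
    rcases hrange 0 ω₀ with h | h
    · rw [hx0 ω₀] at h; exact absurd h hx00
    · rwa [hx0 ω₀] at h
  have hx01 : (1 : ℝ) ≤ x0 := hsmin.trans hx0s
  have hs0 : (0 : ℝ) < smin := lt_of_lt_of_le one_pos hsmin
  have hXm : ∀ t, Measurable (X t) := fun t =>
    (Measurable.mono (hadapted t) (ℱ.le t) le_rfl)
  -- the potential function
  set Y : ℕ → Ω → ℝ := fun t ω => if X t ω = 0 then 0 else Real.log (X t ω) + 1 with hYdef
  -- the survival sets
  set A : ℕ → Set Ω := fun t => {ω | ∀ s ≤ t, X s ω ≠ 0} with hAdef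
  have hAmF : ∀ t, MeasurableSet[ℱ t] (A t) := by
    intro t
    have : A t = ⋂ (s : ℕ) (_ : s ≤ t), {ω | X s ω ≠ 0} := by
      ext ω; simp [hAdef]
    rw [this]
    refine MeasurableSet.iInter fun s => MeasurableSet.iInter fun hs => ?_
    exact (Measurable.mono (hadapted s) (ℱ.mono hs) le_rfl)
      (measurableSet_singleton (0 : ℝ)).compl
  have hAm : ∀ t, MeasurableSet (A t) := fun t => ℱ.le t _ (hAmF t)
  have hAmono : ∀ t, A (t + 1) ⊆ A t := by
    intro t ω hω s hs
    exact hω s (hs.trans (Nat.le_succ t))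
  have hYnn : ∀ t ω, 0 ≤ Y t ω := by
    intro t ω
    simp only [hYdef]
    split_ifs with h
    · exact le_refl 0
    · rcases hrange t ω with h' | h'
      · exact absurd h' h
      · have := Real.log_nonneg (hsmin.trans h')
        linarith
  have hYmeas : ∀ t, Measurable (Y t) := by
    intro t
    exact Measurable.ite ((hXm t) (measurableSet_singleton 0)) measurable_const
      ((Real.measurable_log.comp (hXm t)).add_const 1)
  have hYint : ∀ t, Integrable (Y t) μ := by
    intro t
    refine Integrable.mono ((hint t).abs.add (integrable_const 1))
      (hYmeas t).aestronglyMeasurable (ae_of_all _ fun ω => ?_)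
    have h1 : ‖Y t ω‖ = Y t ω := Real.norm_of_nonneg (hYnn t ω)
    have h2 : (0:ℝ) ≤ |X t ω| + 1 := by positivity
    simp only [Pi.add_apply]
    rw [h1, Real.norm_of_nonneg h2]
    simp only [hYdef]
    split_ifs with h
    · linarith
    · rcases hrange t ω with h' | h'
      · exact absurd h' h
      · have hx1 : (0:ℝ) < X t ω := lt_of_lt_of_le hs0 h'
        have := Real.log_le_sub_one_of_pos hx1
        have habs : X t ω ≤ |X t ω| := le_abs_self _
        linarith
  -- the key per-step estimate
  have key : ∀ t, δ * (μ (A t)).toReal ≤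
      (∫ ω in A t, Y t ω ∂μ) - ∫ ω in A (t + 1), Y (t + 1) ω ∂μ := by
    intro t
    set W : Ω → ℝ := fun ω => X t ω - X (t + 1) ω with hWdef
    set f : Ω → ℝ := (A t).indicator (fun ω => (X t ω)⁻¹) with hfdef
    have hW : Integrable W μ := (hint t).sub (hint (t + 1))
    have hfSM : StronglyMeasurable[ℱ t] f :=
      ((Measurable.inv (hadapted t)).indicator (hAmF t)).stronglyMeasurable
    have hfm : Measurable f := ((hXm t).inv).indicator (hAm t)
    have hXpos : ∀ ω, ω ∈ A t → smin ≤ X t ω := by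
      intro ω hω
      rcases hrange t ω with h | h
      · exact absurd h (hω t le_rfl)
      · exact h
    have hfW : Integrable (f * W) μ := by
      refine Integrable.mono ((((hint t).abs.add (hint (t + 1)).abs)).const_mul smin⁻¹)
        (hfm.mul ((hXm t).sub (hXm (t + 1)))).aestronglyMeasurable
        (ae_of_all _ fun ω => ?_)
      have hnn : (0:ℝ) ≤ smin⁻¹ * (|X t ω| + |X (t + 1) ω|) := by positivity
      simp only [Pi.add_apply]
      rw [Real.norm_of_nonneg hnn]
      by_cases hω : ω ∈ A t
      · have hx : smin ≤ X t ω := hXpos ω hω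
        have hx0' : (0:ℝ) < X t ω := lt_of_lt_of_le hs0 hx
        simp only [Pi.mul_apply, hfdef, Set.indicator_of_mem hω]
        rw [norm_mul]
        have h1 : ‖(X t ω)⁻¹‖ ≤ smin⁻¹ := by
          rw [Real.norm_of_nonneg (by positivity)]
          exact inv_anti₀ hs0 hx
        have h2 : ‖W ω‖ ≤ |X t ω| + |X (t + 1) ω| := by
          simp only [hWdef, Real.norm_eq_abs]
          exact (abs_sub _ _)
        exact mul_le_mul h1 h2 (norm_nonneg _) (by positivity)
      · simp only [Pi.mul_apply, hfdef, Set.indicator_of_notMem hω]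
        rw [zero_mul, norm_zero]
        exact hnn
    have hpull : μ[f * W | ℱ t] =ᵐ[μ] f * μ[W | ℱ t] :=
      condExp_mul_of_stronglyMeasurable_left hfSM hfW hW
    haveI : SigmaFinite (μ.trim (ℱ.le t)) := by infer_instance
    -- step 1: δ μ(A t) ≤ ∫ f W
    have h1 : δ * (μ (A t)).toReal ≤ ∫ ω, (f * W) ω ∂μ := by
      have hind : Integrable ((A t).indicator (fun _ => δ)) μ :=
        (integrable_const δ).indicator (hAm t)
      have hae : ∀ᵐ ω ∂μ, (A t).indicator (fun _ => δ) ω ≤ (f * μ[W | ℱ t]) ω := by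
        filter_upwards [hdrift t] with ω hd
        by_cases hω : ω ∈ A t
        · have hx : smin ≤ X t ω := hXpos ω hω
          have hx0' : (0:ℝ) < X t ω := lt_of_lt_of_le hs0 hx
          rw [Set.indicator_of_mem hω]
          have hd' := hd hx0'
          simp only [Pi.mul_apply, hfdef, Set.indicator_of_mem hω]
          have : δ = (X t ω)⁻¹ * (δ * X t ω) := by field_simp
          rw [this]
          exact mul_le_mul_of_nonneg_left hd' (by positivity)
        · rw [Set.indicator_of_notMem hω]
          simp only [Pi.mul_apply, hfdef, Set.indicator_of_notMem hω, zero_mul]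
          exact le_refl 0
      have hint2 : Integrable (f * μ[W | ℱ t]) μ :=
        (integrable_condExp.congr hpull)
      calc δ * (μ (A t)).toReal = ∫ ω, (A t).indicator (fun _ => δ) ω ∂μ := by
            rw [integral_indicator_const δ (hAm t)]; rw [smul_eq_mul, mul_comm]; rfl
        _ ≤ ∫ ω, (f * μ[W | ℱ t]) ω ∂μ := integral_mono_ae hind hint2 hae
        _ = ∫ ω, (μ[f * W | ℱ t]) ω ∂μ := integral_congr_ae hpull.symm
        _ = ∫ ω, (f * W) ω ∂μ := integral_condExp (ℱ.le t)
    -- step 2: ∫ f W ≤ ∫_{A t} (Y t - Y (t+1))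
    have h2 : ∫ ω, (f * W) ω ∂μ ≤ ∫ ω in A t, (Y t ω - Y (t + 1) ω) ∂μ := by
      have heq : ∀ ω, (f * W) ω = (A t).indicator (fun ω => W ω / X t ω) ω := by
        intro ω
        by_cases hω : ω ∈ A t
        · simp [hfdef, Set.indicator_of_mem hω, div_eq_mul_inv, mul_comm]
        · simp [hfdef, Set.indicator_of_notMem hω]
      rw [integral_congr_ae (ae_of_all _ heq), integral_indicator (hAm t)]
      have hWXint : IntegrableOn (fun ω => W ω / X t ω) (A t) μ :=
        (integrable_indicator_iff (hAm t)).mp (hfW.congr (ae_of_all _ heq))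
      refine setIntegral_mono_on hWXint
        (((hYint t).sub (hYint (t + 1))).integrableOn) (hAm t) fun ω hω => ?_
      have hx : smin ≤ X t ω := hXpos ω hω
      have hYt : Y t ω = Real.log (X t ω) + 1 := by
        simp only [hYdef]
        rw [if_neg (by have := lt_of_lt_of_le hs0 hx; exact this.ne')]
      have := drift_aux_log hsmin hx (hrange (t + 1) ω)
      rw [hYt]
      simpa only [hWdef, hYdef] using this
    -- step 3: split and use monotonicity in the set
    have h3 : ∫ ω in A t, (Y t ω - Y (t + 1) ω) ∂μ =
        (∫ ω in A t, Y t ω ∂μ) - ∫ ω in A t, Y (t + 1) ω ∂μ :=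
      integral_sub ((hYint t).integrableOn) ((hYint (t + 1)).integrableOn)
    have h4 : ∫ ω in A (t + 1), Y (t + 1) ω ∂μ ≤ ∫ ω in A t, Y (t + 1) ω ∂μ :=
      setIntegral_mono_set ((hYint (t + 1)).integrableOn)
        (ae_of_all _ fun ω => hYnn (t + 1) ω) ((hAmono t).eventuallyLE)
    linarith [h1, h2]
  -- telescoping: partial sums are bounded
  have hg0 : ∫ ω in A 0, Y 0 ω ∂μ ≤ Real.log x0 + 1 := by
    have hY0 : ∀ ω, Y 0 ω = Real.log x0 + 1 := by
      intro ω
      simp only [hYdef, hx0 ω]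
      rw [if_neg hx00]
    rw [integral_congr_ae (ae_of_all _ fun ω => hY0 ω)]
    rw [setIntegral_const]
    have hc : (0:ℝ) ≤ Real.log x0 + 1 := by
      have := Real.log_nonneg hx01; linarith
    have hμ1 : (μ (A 0)).toReal ≤ 1 :=
      (ENNReal.toReal_mono ENNReal.one_ne_top prob_le_one).trans_eq ENNReal.toReal_one
    rw [smul_eq_mul]
    calc (μ (A 0)).toReal * (Real.log x0 + 1) ≤ 1 * (Real.log x0 + 1) :=
          mul_le_mul_of_nonneg_right hμ1 hc
      _ = Real.log x0 + 1 := one_mul _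
  have hgnn : ∀ n, 0 ≤ ∫ ω in A n, Y n ω ∂μ := fun n =>
    setIntegral_nonneg (hAm n) fun ω _ => hYnn n ω
  have hpartial : ∀ n : ℕ, ∑ t ∈ Finset.range n, (μ (A t)).toReal ≤ (Real.log x0 + 1) / δ := by
    intro n
    rw [le_div_iff₀ hδ, mul_comm]
    have h1 : ∑ t ∈ Finset.range n, δ * (μ (A t)).toReal ≤
        ∑ t ∈ Finset.range n, ((∫ ω in A t, Y t ω ∂μ) - ∫ ω in A (t + 1), Y (t + 1) ω ∂μ) :=
      Finset.sum_le_sum fun t _ => key t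
    rw [Finset.sum_range_sub' (fun t => ∫ ω in A t, Y t ω ∂μ)] at h1
    rw [← Finset.mul_sum] at h1
    have h2 := hgnn n
    linarith
  -- rewrite the hitting time as a sum of indicators
  have hTeq : ∀ ω, sInf {r : ℝ≥0∞ | ∃ t : ℕ, r = t ∧ X t ω = 0}
      = ∑' t : ℕ, (A t).indicator (fun _ => (1 : ℝ≥0∞)) ω := by
    intro ω
    rw [drift_aux_hit (fun t => X t ω = 0)]
    refine tsum_congr fun t => ?_
    by_cases hω : ω ∈ A t
    · rw [Set.indicator_of_mem hω, if_pos (show ∀ s ≤ t, ¬ X s ω = 0 from hω)]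
    · rw [Set.indicator_of_notMem hω, if_neg (show ¬ ∀ s ≤ t, ¬ X s ω = 0 from hω)]
  calc ∫⁻ ω, sInf {r : ℝ≥0∞ | ∃ t : ℕ, r = t ∧ X t ω = 0} ∂μ
      = ∫⁻ ω, ∑' t : ℕ, (A t).indicator (fun _ => (1 : ℝ≥0∞)) ω ∂μ := by
        exact lintegral_congr fun ω => hTeq ω
    _ = ∑' t : ℕ, ∫⁻ ω, (A t).indicator (fun _ => (1 : ℝ≥0∞)) ω ∂μ :=
        lintegral_tsum fun t => (measurable_const.indicator (hAm t)).aemeasurable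
    _ = ∑' t : ℕ, μ (A t) := by
        refine tsum_congr fun t => ?_
        rw [lintegral_indicator (hAm t) (fun _ => (1 : ℝ≥0∞))]
        simp
    _ ≤ ENNReal.ofReal ((Real.log x0 + 1) / δ) := by
        rw [ENNReal.tsum_eq_iSup_nat]
        refine iSup_le fun n => ?_
        have : ∑ t ∈ Finset.range n, μ (A t)
            = ENNReal.ofReal (∑ t ∈ Finset.range n, (μ (A t)).toReal) := by
          rw [ENNReal.ofReal_sum_of_nonneg (fun t _ => ENNReal.toReal_nonneg)]
          refine Finset.sum_congr rfl fun t _ => ?_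
          rw [ENNReal.ofReal_toReal (measure_ne_top μ (A t))]
        rw [this]
        exact ENNReal.ofReal_le_ofReal (hpartial n)
end

section
/- Let α ∈ [1/2, 1), so K_α ≥ 0. Suppose a population P ⊆ {0,1}^n contains, for every k ∈ {0,…,n} and every λ ∈ [0,1], some minimizer of f_λ(x) = λμ(x) + (1−λ)v(x) over {x : |x|_1 = k}. Then P contains, for every k, a minimizer of ŵ(x) = μ(x) + K_α·√(v(x)) over {x : |x|_1 = k}, and hence an optimal solution to minimizing ŵ(x) subject to |x|_1 ≥ k for every k. -/
/-- If a population contains, for every `k` and every `λ ∈ [0,1]`, a minimizer of the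
linear scalarization `f_λ` among `k`-element solutions, then it contains, for every `k`,
a minimizer of `ŵ(x) = μ(x) + K_α √(v(x))` among `k`-element solutions, and an optimal
solution of minimizing `ŵ` subject to `|x|₁ ≥ k`. -/
theorem stmt_16 (n : ℕ) (μw σsq : Fin n → ℝ) (hμ : ∀ i, 1 ≤ μw i) (hσ : ∀ i, 1 ≤ σsq i)
    (K : ℝ) (hK : 0 ≤ K)
    (P : Finset (Finset (Fin n)))
    (hP : ∀ k ≤ n, ∀ lam : ℝ, 0 ≤ lam → lam ≤ 1 →
      ∃ S ∈ P, S.card = k ∧ ∀ T : Finset (Fin n), T.card = k →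
        lam * (∑ i ∈ S, μw i) + (1 - lam) * (∑ i ∈ S, σsq i) ≤
          lam * (∑ i ∈ T, μw i) + (1 - lam) * (∑ i ∈ T, σsq i)) :
    ∀ k ≤ n,
      (∃ S ∈ P, S.card = k ∧ ∀ T : Finset (Fin n), T.card = k →
        (∑ i ∈ S, μw i) + K * Real.sqrt (∑ i ∈ S, σsq i) ≤
          (∑ i ∈ T, μw i) + K * Real.sqrt (∑ i ∈ T, σsq i)) ∧
      (∃ S ∈ P, k ≤ S.card ∧ ∀ T : Finset (Fin n), k ≤ T.card →
        (∑ i ∈ S, μw i) + K * Real.sqrt (∑ i ∈ S, σsq i) ≤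
          (∑ i ∈ T, μw i) + K * Real.sqrt (∑ i ∈ T, σsq i)) := by
  intro k hk
  set w : Finset (Fin n) → ℝ :=
    fun T => (∑ i ∈ T, μw i) + K * Real.sqrt (∑ i ∈ T, σsq i) with hwdef
  have hmono : ∀ A B : Finset (Fin n), A ⊆ B → w A ≤ w B := by
    intro A B hAB
    have h1 : ∑ i ∈ A, μw i ≤ ∑ i ∈ B, μw i :=
      Finset.sum_le_sum_of_subset_of_nonneg hAB
        (fun i _ _ => le_trans zero_le_one (hμ i))
    have h2 : ∑ i ∈ A, σsq i ≤ ∑ i ∈ B, σsq i :=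
      Finset.sum_le_sum_of_subset_of_nonneg hAB
        (fun i _ _ => le_trans zero_le_one (hσ i))
    have h3 := Real.sqrt_le_sqrt h2
    simp only [hwdef]
    nlinarith
  have hmain : ∃ S ∈ P, S.card = k ∧
      ∀ T : Finset (Fin n), T.card = k → w S ≤ w T := by
    rcases Nat.eq_zero_or_pos k with hk0 | hkpos
    · subst hk0
      obtain ⟨S, hSP, hScard, _⟩ := hP 0 (Nat.zero_le n) 1 zero_le_one le_rfl
      refine ⟨S, hSP, hScard, fun T hT => ?_⟩
      have : S = T := by rw [Finset.card_eq_zero.mp hScard, Finset.card_eq_zero.mp hT]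
      rw [this]
    · have hne : (Finset.powersetCard k (Finset.univ : Finset (Fin n))).Nonempty := by
        rw [Finset.powersetCard_nonempty]
        simpa using hk
      obtain ⟨T0, hT0mem, hT0min⟩ := Finset.exists_min_image _ w hne
      have hT0card : T0.card = k := (Finset.mem_powersetCard.mp hT0mem).2
      -- v(T0) ≥ 1
      have hcardle : (T0.card : ℝ) ≤ ∑ i ∈ T0, σsq i := by
        have : ∑ _i ∈ T0, (1 : ℝ) ≤ ∑ i ∈ T0, σsq i :=
          Finset.sum_le_sum (fun i _ => hσ i)
        simpa using this
      have hs0 : (1 : ℝ) ≤ ∑ i ∈ T0, σsq i := by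
        refine le_trans ?_ hcardle
        rw [hT0card]
        exact_mod_cast hkpos
      set s0 : ℝ := ∑ i ∈ T0, σsq i with hs0def
      have hs0pos : 0 < s0 := lt_of_lt_of_le one_pos hs0
      have hsqpos : 0 < Real.sqrt s0 := Real.sqrt_pos.mpr hs0pos
      set t : ℝ := K / (2 * Real.sqrt s0) with htdef
      have ht : 0 ≤ t := div_nonneg hK (by positivity)
      have htK : t * (2 * Real.sqrt s0) = K := div_mul_cancel₀ K (by positivity)
      set lam : ℝ := 1 / (1 + t) with hlamdef
      have h1t : (0:ℝ) < 1 + t := by linarith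
      have hlampos : 0 < lam := by positivity
      have hlam1 : lam ≤ 1 := by
        rw [hlamdef]; rw [div_le_one h1t]; linarith
      have hlamt : 1 - lam = lam * t := by
        rw [hlamdef, one_div, inv_mul_eq_div, eq_div_iff h1t.ne', sub_mul, inv_mul_cancel₀ h1t.ne', one_mul]; ring
      obtain ⟨S, hSP, hScard, hSmin⟩ := hP k hk lam hlampos.le hlam1
      refine ⟨S, hSP, hScard, fun T hT => ?_⟩
      have hTmem : T ∈ Finset.powersetCard k (Finset.univ : Finset (Fin n)) :=
        Finset.mem_powersetCard.mpr ⟨Finset.subset_univ _, hT⟩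
      have hwT0T : w T0 ≤ w T := hT0min T hTmem
      -- linear inequality at T0
      have hlin := hSmin T0 hT0card
      have hkey : (∑ i ∈ S, μw i) + t * (∑ i ∈ S, σsq i) ≤
          (∑ i ∈ T0, μw i) + t * s0 := by
        rw [hlamt] at hlin
        have := hlin
        nlinarith [hlampos]
      -- tangent inequality for sqrt
      have hsS : (0:ℝ) ≤ ∑ i ∈ S, σsq i :=
        Finset.sum_nonneg (fun i _ => le_trans zero_le_one (hσ i))
      have htan : Real.sqrt (∑ i ∈ S, σsq i) ≤
          Real.sqrt s0 + ((∑ i ∈ S, σsq i) - s0) / (2 * Real.sqrt s0) := by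
        have hquot : Real.sqrt (∑ i ∈ S, σsq i) - Real.sqrt s0 ≤
            ((∑ i ∈ S, σsq i) - s0) / (2 * Real.sqrt s0) := by
          rw [le_div_iff₀ (by positivity)]
          nlinarith [Real.sq_sqrt hsS, Real.sq_sqrt hs0pos.le,
            Real.sqrt_nonneg (∑ i ∈ S, σsq i),
            sq_nonneg (Real.sqrt (∑ i ∈ S, σsq i) - Real.sqrt s0)]
        linarith
      have hKtan : K * Real.sqrt (∑ i ∈ S, σsq i) ≤
          K * Real.sqrt s0 + t * ((∑ i ∈ S, σsq i) - s0) := by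
        have h1 : K * Real.sqrt (∑ i ∈ S, σsq i) ≤
            K * (Real.sqrt s0 + ((∑ i ∈ S, σsq i) - s0) / (2 * Real.sqrt s0)) :=
          mul_le_mul_of_nonneg_left htan hK
        have h2 : K * (((∑ i ∈ S, σsq i) - s0) / (2 * Real.sqrt s0)) =
            t * ((∑ i ∈ S, σsq i) - s0) := by
          rw [htdef]; field_simp
        nlinarith [h1, h2]
      have hwS_le_T0 : w S ≤ w T0 := by
        simp only [hwdef]
        have : (∑ i ∈ T0, σsq i) = s0 := rfl
        rw [this]
        linarith [hKtan, hkey]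
      exact le_trans hwS_le_T0 hwT0T
  obtain ⟨S, hSP, hScard, hSmin⟩ := hmain
  constructor
  · exact ⟨S, hSP, hScard, hSmin⟩
  · refine ⟨S, hSP, hScard ▸ le_refl k, fun T hT => ?_⟩
    obtain ⟨T', hT'sub, hT'card⟩ := Finset.exists_subset_card_eq hT
    exact le_trans (hSmin T' hT'card) (hmono T' T hT'sub)
end
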